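/- Let a, b, c be three distinct vertices of a 2-connected graph G. Then there exists a circuit C containing a and b, and a path P from c to some vertex t on C with t different from a and b, such that no vertex of P other than t lies on C (where the degenerate case c = t with empty path P is allowed). -/

import Mathlib

open SimpleGraph

universe u v

/-- A circuit of `G` is the edge set of a cycle of `G`. -/
def IsCircuit {V : Type u} (G : SimpleGraph V) (C : Set (Sym2 V)) : Prop :=
  ∃ (x : V) (w : G.Walk x x), w.IsCycle ∧ C = {e | e ∈ w.edges}

/-- The set of vertices covered by a set of edges. -/
def circVerts {V : Type u} (C : Set (Sym2 V)) : Set V :=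
  {x | ∃ e ∈ C, x ∈ e}

/-- A set of edges is independent if its edges are pairwise nonadjacent. -/
def IndepEdges {V : Type u} (A : Set (Sym2 V)) : Prop :=
  ∀ e₁ ∈ A, ∀ e₂ ∈ A, e₁ ≠ e₂ → ∀ x : V, x ∈ e₁ → x ∉ e₂

/-- 2-connected: connected, at least 3 vertices, and deleting any one vertex
leaves the graph connected. -/
def TwoConnected {V : Type u} (G : SimpleGraph V) : Prop :=
  G.Connected ∧ (3 : Cardinal) ≤ Cardinal.mk V ∧
    ∀ x : V, (G.induce {x}ᶜ).Connected

/-- 3-connected: at least 4 vertices and deleting any two vertices leaves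
the graph connected. -/
def ThreeConnected {V : Type u} (G : SimpleGraph V) : Prop :=
  (4 : Cardinal) ≤ Cardinal.mk V ∧
    ∀ x y : V, (G.induce ({x, y} : Set V)ᶜ).Connected

/-- k-connected: more than k vertices and deleting any set of fewer than k
vertices leaves the graph connected. -/
def KConnected {V : Type u} (k : ℕ) (G : SimpleGraph V) : Prop :=
  (k : Cardinal) < Cardinal.mk V ∧
    ∀ s : Set V, s.Finite → Nat.card s < k → (G.induce sᶜ).Connected

/-- The image of a set of edges of `G` under an edge map `f`. -/
def mapEdges {V : Type u} {V' : Type v} (G : SimpleGraph V) (G' : SimpleGraph V')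
    (f : G.edgeSet → G'.edgeSet) (C : Set (Sym2 V)) : Set (Sym2 V') :=
  {e' | ∃ e : G.edgeSet, (e : Sym2 V) ∈ C ∧ (f e : Sym2 V') = e'}

/-- The preimage of a set of edges of `G'` under an edge map `f`. -/
def preimEdges {V : Type u} {V' : Type v} (G : SimpleGraph V) (G' : SimpleGraph V')
    (f : G.edgeSet → G'.edgeSet) (S : Set (Sym2 V')) : Set (Sym2 V) :=
  {e | ∃ he : e ∈ G.edgeSet, (f ⟨e, he⟩ : Sym2 V') ∈ S}

/-- A circuit injection from `G` onto `G'`: an injective, surjective map on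
edges carrying every circuit of `G` to a circuit of `G'`, where `G'` has no
isolated vertices. -/
def IsCircuitInjection {V : Type u} {V' : Type v} (G : SimpleGraph V) (G' : SimpleGraph V')
    (f : G.edgeSet → G'.edgeSet) : Prop :=
  Function.Injective f ∧ Function.Surjective f ∧
    (∀ C : Set (Sym2 V), IsCircuit G C → IsCircuit G' (mapEdges G G' f C)) ∧
    ∀ x : V', ∃ y : V', G'.Adj x y

/-- `G` contains a subgraph of type X with connectors `e₁`, `e₂`, `e₃`:
two vertex-disjoint circuits `CA`, `CB`, edges `e₁ = (a₁,b₁)`, `e₂ = (a₂,b₂)`,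
and a path from `a₃` to `b₃` internally disjoint from both circuits, with
`a₁,a₂,a₃` distinct on `CA` and `b₁,b₂,b₃` distinct on `CB`, and `e₃` an edge
of the path. -/
def IsTypeXWith {V : Type u} (G : SimpleGraph V) (e₁ e₂ e₃ : Sym2 V) : Prop :=
  ∃ (a₁ a₂ a₃ b₁ b₂ b₃ : V) (CA CB : Set (Sym2 V)) (P : G.Walk a₃ b₃),
    IsCircuit G CA ∧ IsCircuit G CB ∧
    Disjoint (circVerts CA) (circVerts CB) ∧
    a₁ ∈ circVerts CA ∧ a₂ ∈ circVerts CA ∧ a₃ ∈ circVerts CA ∧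
    b₁ ∈ circVerts CB ∧ b₂ ∈ circVerts CB ∧ b₃ ∈ circVerts CB ∧
    a₁ ≠ a₂ ∧ a₁ ≠ a₃ ∧ a₂ ≠ a₃ ∧ b₁ ≠ b₂ ∧ b₁ ≠ b₃ ∧ b₂ ≠ b₃ ∧
    G.Adj a₁ b₁ ∧ G.Adj a₂ b₂ ∧ e₁ = s(a₁, b₁) ∧ e₂ = s(a₂, b₂) ∧
    P.IsPath ∧
    (∀ x ∈ P.support, x ≠ a₃ → x ≠ b₃ → x ∉ circVerts CA ∪ circVerts CB) ∧
    e₃ ∈ P.edges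

/-- `G` is (all of) a graph of type X with connectors `e₁`, `e₂`, `e₃`. -/
def IsTypeXGraph {V : Type u} (G : SimpleGraph V) (e₁ e₂ e₃ : Sym2 V) : Prop :=
  ∃ (a₁ a₂ a₃ b₁ b₂ b₃ : V) (CA CB : Set (Sym2 V)) (P : G.Walk a₃ b₃),
    IsCircuit G CA ∧ IsCircuit G CB ∧
    Disjoint (circVerts CA) (circVerts CB) ∧
    a₁ ∈ circVerts CA ∧ a₂ ∈ circVerts CA ∧ a₃ ∈ circVerts CA ∧
    b₁ ∈ circVerts CB ∧ b₂ ∈ circVerts CB ∧ b₃ ∈ circVerts CB ∧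
    a₁ ≠ a₂ ∧ a₁ ≠ a₃ ∧ a₂ ≠ a₃ ∧ b₁ ≠ b₂ ∧ b₁ ≠ b₃ ∧ b₂ ≠ b₃ ∧
    G.Adj a₁ b₁ ∧ G.Adj a₂ b₂ ∧ e₁ = s(a₁, b₁) ∧ e₂ = s(a₂, b₂) ∧
    P.IsPath ∧
    (∀ x ∈ P.support, x ≠ a₃ → x ≠ b₃ → x ∉ circVerts CA ∪ circVerts CB) ∧
    e₃ ∈ P.edges ∧
    G.edgeSet = CA ∪ CB ∪ {e₁, e₂} ∪ {e | e ∈ P.edges}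

namespace St1Aux

variable {V : Type u} {G : SimpleGraph V}


lemma firstHit [DecidableEq V] (S : Set V) [DecidablePred (· ∈ S)] :
    ∀ {a b : V} (w : G.Walk a b), b ∈ S →
    ∃ (x : V) (w1 : G.Walk a x) (w2 : G.Walk x b), x ∈ S ∧ w = w1.append w2 ∧
      ∀ y ∈ w1.support, y ∈ S → y = x
  | a, _, Walk.nil, hb => ⟨a, Walk.nil, Walk.nil, hb, rfl, by simp⟩
  | a, b, Walk.cons h p, hb =>
    if ha : a ∈ S then ⟨a, Walk.nil, Walk.cons h p, ha, rfl, by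
      intro y hy _; simpa using hy⟩
    else by
      obtain ⟨x, w1, w2, hx, hsplit, hmin⟩ := firstHit S p hb
      refine ⟨x, Walk.cons h w1, w2, hx, by rw [Walk.cons_append, ← hsplit], ?_⟩
      intro y hy hyS
      rcases List.mem_cons.mp (by simpa using hy) with rfl | hy'
      · exact absurd hyS ha
      · exact hmin y hy' hyS

lemma walk_of_induce_connected {s : Set V} (hc : (G.induce s).Connected)
    {a b : V} (ha : a ∈ s) (hb : b ∈ s) :
    ∃ p : G.Walk a b, p.IsPath ∧ ∀ z ∈ p.support, z ∈ s := by
  classical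
  obtain ⟨w⟩ := hc.preconnected ⟨a, ha⟩ ⟨b, hb⟩
  let f := (SimpleGraph.Embedding.induce s (G := G)).toHom
  have h1 : f ⟨a, ha⟩ = a := rfl
  have h2 : f ⟨b, hb⟩ = b := rfl
  refine ⟨(((w.map f).toPath : G.Walk _ _).copy h1 h2), ?_, fun z hz => ?_⟩
  · rw [Walk.isPath_copy]; exact ((w.map f).toPath).2
  rw [Walk.support_copy] at hz
  have hz' : z ∈ (w.map f).support := (w.map f).support_toPath_subset hz
  rw [Walk.support_map] at hz'
  obtain ⟨y, _, rfl⟩ := List.mem_map.mp hz'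
  exact y.2

lemma end_mem_tail_of_not_nil {a b : V} (p : G.Walk a b) (h : ¬ p.Nil) :
    b ∈ p.support.tail := by
  cases p with
  | nil => simp at h
  | cons h q => simpa using q.end_mem_support

lemma mem_support_iff_mem_tail {w z : V} (c : G.Walk w w) (hc : ¬ c.Nil) :
    z ∈ c.support ↔ z ∈ c.support.tail := by
  constructor
  · intro h
    rw [c.support_eq_cons] at h
    rcases List.mem_cons.mp h with rfl | h
    · exact end_mem_tail_of_not_nil c hc
    · exact h
  · exact fun h => List.mem_of_mem_tail h

lemma mem_support_rotate_iff [DecidableEq V] {w x z : V} (c : G.Walk w w) (hc : ¬ c.Nil)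
    (hx : x ∈ c.support) :
    z ∈ (c.rotate x hx).support ↔ z ∈ c.support := by
  have hlen : (c.rotate x hx).length = c.length := by
    have h1 := congr_arg Walk.length (c.take_spec hx)
    rw [Walk.length_append] at h1
    rw [Walk.rotate, Walk.length_append]
    omega
  have hrotnil : ¬ (c.rotate x hx).Nil := by
    rw [Walk.nil_iff_length_eq] at hc ⊢
    rwa [hlen]
  rw [mem_support_iff_mem_tail _ hrotnil, mem_support_iff_mem_tail _ hc]
  exact (Walk.support_rotate c x hx).mem_iff

lemma exists_edge_of_mem_support {a b z : V} (w : G.Walk a b) (hnil : ¬ w.Nil)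
    (hz : z ∈ w.support) : ∃ e ∈ w.edges, z ∈ e := by
  induction w with
  | nil => simp at hnil
  | @cons u u' v h' p ih =>
    rw [Walk.support_cons] at hz
    rcases List.mem_cons.mp hz with rfl | hz
    · exact ⟨s(z, u'), by simp, Sym2.mem_mk_left _ _⟩
    · by_cases hp : p.Nil
      · rw [Walk.nil_iff_support_eq.mp hp] at hz
        simp only [List.mem_singleton] at hz
        subst hz
        exact ⟨s(u, z), by simp, Sym2.mem_mk_right _ _⟩
      · obtain ⟨e, he, hze⟩ := ih hp hz
        exact ⟨e, by simp [he], hze⟩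


lemma mem_exists_edge_iff {a z : V} (w : G.Walk a a) (hnil : ¬ w.Nil) :
    (∃ e ∈ w.edges, z ∈ e) ↔ z ∈ w.support := by
  constructor
  · rintro ⟨e, he, hz⟩
    induction e with
    | _ α β =>
      rcases Sym2.mem_iff.mp hz with rfl | rfl
      · exact w.fst_mem_support_of_mem_edges he
      · exact w.snd_mem_support_of_mem_edges he
  · intro h
    exact exists_edge_of_mem_support w hnil h

lemma edges_disjoint_of_support_inter {u1 v1 u2 v2 : V} (p : G.Walk u1 v1) (q : G.Walk u2 v2)
    {m : V} (hm : ∀ z, z ∈ p.support → z ∈ q.support → z = m) :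
    ∀ e ∈ p.edges, e ∉ q.edges := by
  intro e hep heq
  induction e with
  | _ α β =>
    have hα := hm α (p.fst_mem_support_of_mem_edges hep) (q.fst_mem_support_of_mem_edges heq)
    have hβ := hm β (p.snd_mem_support_of_mem_edges hep) (q.snd_mem_support_of_mem_edges heq)
    have hadj : G.Adj α β := G.mem_edgeSet.mp (p.edges_subset_edgeSet hep)
    exact hadj.ne (hα.trans hβ.symm)

lemma triangle_cycle {a b c : V} (p : G.Walk a b) (q : G.Walk b c) (r : G.Walk c a)
    (hp : p.IsPath) (hq : q.IsPath) (hr : r.IsPath)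
    (hab : a ≠ b) (hbc : b ≠ c) (hac : a ≠ c)
    (hpq : ∀ z, z ∈ p.support → z ∈ q.support → z = b)
    (hqr : ∀ z, z ∈ q.support → z ∈ r.support → z = c)
    (hrp : ∀ z, z ∈ r.support → z ∈ p.support → z = a) :
    (p.append (q.append r)).IsCycle := by
  have hne : p.append (q.append r) ≠ Walk.nil := by
    intro h
    have hb : b ∈ (p.append (q.append r)).support := by
      rw [Walk.mem_support_append_iff]; exact Or.inl p.end_mem_support
    rw [h] at hb
    simp at hb
    exact hab hb.symm
  have hedges : (p.append (q.append r)).edges = p.edges ++ (q.edges ++ r.edges) := by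
    rw [Walk.edges_append, Walk.edges_append]
  have hEpq := edges_disjoint_of_support_inter p q hpq
  have hEqr := edges_disjoint_of_support_inter q r hqr
  have hEpr : ∀ e ∈ p.edges, e ∉ r.edges := by
    intro e hep her
    exact edges_disjoint_of_support_inter r p (fun z h1 h2 => hrp z h1 h2) e her hep
  have hEnodup : (p.append (q.append r)).edges.Nodup := by
    rw [hedges]
    rw [List.nodup_append, List.nodup_append]
    refine ⟨hp.isTrail.edges_nodup, ⟨hq.isTrail.edges_nodup, hr.isTrail.edges_nodup, ?_⟩, ?_⟩
    · intro e he e' he' hee; subst hee; exact hEqr e he he'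
    · intro e he e' he' hee; subst hee
      rcases List.mem_append.mp he' with h | h
      · exact hEpq e he h
      · exact hEpr e he h
  have htail : (p.append (q.append r)).support.tail
      = p.support.tail ++ (q.support.tail ++ r.support.tail) := by
    rw [Walk.tail_support_append, Walk.tail_support_append]
  have hsupnodup : (p.append (q.append r)).support.tail.Nodup := by
    rw [htail, List.nodup_append, List.nodup_append]
    have hpn := hp.support_nodup
    have hqn := hq.support_nodup
    have hrn := hr.support_nodup
    have hheadp : a ∉ p.support.tail := (List.nodup_cons.mp (p.support_eq_cons ▸ hpn)).1
    have hheadq : b ∉ q.support.tail := (List.nodup_cons.mp (q.support_eq_cons ▸ hqn)).1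
    have hheadr : c ∉ r.support.tail := (List.nodup_cons.mp (r.support_eq_cons ▸ hrn)).1
    refine ⟨hpn.sublist (List.tail_sublist _), ⟨hqn.sublist (List.tail_sublist _),
      hrn.sublist (List.tail_sublist _), ?_⟩, ?_⟩
    · intro z hz z' hz' hzz; subst hzz
      exact hheadr ((hqr z (List.mem_of_mem_tail hz) (List.mem_of_mem_tail hz')) ▸ hz')
    · intro z hz z' hz' hzz; subst hzz
      rcases List.mem_append.mp hz' with h | h
      · exact hheadq ((hpq z (List.mem_of_mem_tail hz) (List.mem_of_mem_tail h)) ▸ h)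
      · exact hheadp ((hrp z (List.mem_of_mem_tail h) (List.mem_of_mem_tail hz)) ▸ hz)
  exact ⟨⟨⟨hEnodup⟩, hne⟩, hsupnodup⟩

lemma cycle_split [DecidableEq V] {x y : V} {c : G.Walk x x} (hc : c.IsCycle)
    (hy : y ∈ c.support) (hyx : y ≠ x) :
    (c.takeUntil y hy).IsPath ∧ (c.dropUntil y hy).IsPath ∧
      (∀ a ∈ c.support, a ∈ (c.takeUntil y hy).support ∨ a ∈ (c.dropUntil y hy).support) := by
  set T := c.takeUntil y hy with hT
  set D := c.dropUntil y hy with hD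
  have hspec : T.append D = c := c.take_spec hy
  have hsup : c.support = T.support ++ D.support.tail := by
    rw [← hspec, Walk.support_append]
  have htail : c.support.tail = T.support.tail ++ D.support.tail := by
    rw [← hspec, Walk.tail_support_append]
  have hnd := hc.support_nodup
  rw [htail, List.nodup_append] at hnd
  obtain ⟨hTnd, hDnd, hdisj⟩ := hnd
  have hTpath : T.IsPath := by
    rw [Walk.isPath_def, T.support_eq_cons, List.nodup_cons]
    refine ⟨fun hxT => ?_, hTnd⟩
    have hxD : x ∈ D.support.tail := by
      have : x ∈ D.support := D.end_mem_support
      rw [D.support_eq_cons] at this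
      rcases List.mem_cons.mp this with h | h
      · exact absurd h.symm hyx
      · exact h
    exact hdisj x hxT x hxD rfl
  have hDpath : D.IsPath := by
    rw [Walk.isPath_def, D.support_eq_cons, List.nodup_cons]
    refine ⟨fun hyD => ?_, hDnd⟩
    have hyT : y ∈ T.support.tail := by
      have : y ∈ T.support := T.end_mem_support
      rw [T.support_eq_cons] at this
      rcases List.mem_cons.mp this with h | h
      · exact absurd h hyx
      · exact h
    exact hdisj y hyT y hyD rfl
  refine ⟨hTpath, hDpath, fun a ha => ?_⟩
  rw [hsup] at ha
  rcases List.mem_append.mp ha with h | h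
  · exact Or.inl h
  · exact Or.inr (List.mem_of_mem_tail h)

lemma exists_third (h : (3 : Cardinal) ≤ Cardinal.mk V) (a b : V) :
    ∃ z : V, z ≠ a ∧ z ≠ b := by
  by_contra hcon
  push_neg at hcon
  have hsub : (Set.univ : Set V) ⊆ {a, b} := by
    intro z _
    by_cases hz : z = a
    · exact Or.inl hz
    · exact Or.inr (hcon z hz)
  have h1 : Cardinal.mk V ≤ 2 := by
    calc Cardinal.mk V = Cardinal.mk (Set.univ : Set V) := Cardinal.mk_univ.symm
    _ ≤ Cardinal.mk ({a, b} : Set V) := Cardinal.mk_le_mk_of_subset hsub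
    _ ≤ Cardinal.mk ({b} : Set V) + 1 := Cardinal.mk_insert_le
    _ = 2 := by rw [Cardinal.mk_singleton]; norm_num
  have : (3 : Cardinal) ≤ 2 := le_trans h h1
  norm_num at this

lemma exists_neighbor_ne (hcard : (3 : Cardinal) ≤ Cardinal.mk V)
    (hind : ∀ x : V, (G.induce {x}ᶜ).Connected) (a b : V) (hab : a ≠ b) :
    ∃ a' : V, G.Adj a a' ∧ a' ≠ b := by
  obtain ⟨z, hza, hzb⟩ := exists_third hcard a b
  obtain ⟨p, hp, hps⟩ := walk_of_induce_connected (hind b)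
    (show a ∈ ({b}ᶜ : Set V) from hab) (show z ∈ ({b}ᶜ : Set V) from hzb)
  cases p with
  | nil => exact absurd rfl hza.symm
  | @cons u u' v h q =>
    refine ⟨u', h, ?_⟩
    exact hps u' (by simp [Walk.support_cons, q.start_mem_support])

lemma isPath_singleton {x y : V} (h : G.Adj x y) : (Walk.cons h Walk.nil).IsPath := by
  rw [Walk.isPath_def]
  simp [h.ne]

lemma cycle_through_pair (hconn : G.Connected)
    (hcard : (3 : Cardinal) ≤ Cardinal.mk V)
    (hind : ∀ x : V, (G.induce {x}ᶜ).Connected) :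
    ∀ (n : ℕ) {a b : V}, G.dist a b = n → a ≠ b →
      ∃ (u : V) (w : G.Walk u u), w.IsCycle ∧ a ∈ w.support ∧ b ∈ w.support := by
  classical
  intro n
  induction n using Nat.strong_induction_on with
  | _ n ih =>
  intro a b hdist hab
  by_cases h0 : n = 0
  · subst h0; exact absurd ((hconn.dist_eq_zero_iff).mp hdist) hab
  by_cases h1 : n = 1
  · subst h1
    have hadj : G.Adj a b := SimpleGraph.dist_eq_one_iff_adj.mp hdist
    obtain ⟨a', haa', ha'b⟩ := exists_neighbor_ne hcard hind a b hab
    obtain ⟨Q, hQ, hQs⟩ := walk_of_induce_connected (hind a)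
      (show a' ∈ ({a}ᶜ : Set V) by simp [haa'.ne'])
      (show b ∈ ({a}ᶜ : Set V) by simp [hab.symm])
    have haQ : ∀ z ∈ Q.support, z ≠ a := fun z hz => by simpa using hQs z hz
    have hcyc : ((Walk.cons haa' Walk.nil).append
        (Q.append (Walk.cons hadj.symm Walk.nil))).IsCycle := by
      refine triangle_cycle _ _ _ (isPath_singleton haa') hQ (isPath_singleton hadj.symm)
        haa'.ne ha'b hab ?_ ?_ ?_
      · intro z hz hzQ
        rcases (by simpa using hz : z = a ∨ z = a') with rfl | rfl
        · exact absurd rfl (haQ z hzQ)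
        · rfl
      · intro z hzQ hz
        rcases (by simpa using hz : z = b ∨ z = a) with rfl | rfl
        · rfl
        · exact absurd rfl (haQ z hzQ)
      · intro z hz hz'
        rcases (by simpa using hz : z = b ∨ z = a) with rfl | rfl
        · rcases (by simpa using hz' : z = a ∨ z = a') with rfl | rfl
          · rfl
          · exact absurd rfl ha'b
        · rfl
    refine ⟨a, _, hcyc, Walk.start_mem_support _, ?_⟩
    rw [Walk.mem_support_append_iff, Walk.mem_support_append_iff]
    exact Or.inr (Or.inl Q.end_mem_support)
  -- step case : 2 ≤ n
  have hn2 : 2 ≤ n := by omega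
  obtain ⟨p, hplen⟩ := hconn.exists_walk_length_eq_dist a b
  have hrlen : p.reverse.length = n := by rw [Walk.length_reverse, hplen, hdist]
  have hnotnil : ¬ p.reverse.Nil := by rw [Walk.nil_iff_length_eq]; omega
  obtain ⟨x, hadj, q, heq⟩ := Walk.not_nil_iff.mp hnotnil
  have hqlen : q.length = n - 1 := by
    rw [heq] at hrlen; simp only [Walk.length_cons] at hrlen; omega
  have hdistax_le : G.dist a x ≤ n - 1 :=
    le_trans (SimpleGraph.dist_le q.reverse) (by rw [Walk.length_reverse, hqlen])
  have hdistxb : G.dist x b ≤ 1 := by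
    have := SimpleGraph.dist_le (Walk.cons hadj.symm Walk.nil : G.Walk x b)
    simpa using this
  have htri := hconn.dist_triangle (u := a) (v := x) (w := b)
  have hdax : G.dist a x = n - 1 := by omega
  have hax : a ≠ x := by
    intro h; rw [← h, SimpleGraph.dist_self] at hdax; omega
  obtain ⟨u₀, w₀, hw₀, haw₀, hxw₀⟩ := ih (n-1) (by omega) hdax hax
  by_cases hbw : b ∈ w₀.support
  · exact ⟨u₀, w₀, hw₀, haw₀, hbw⟩
  have hw₀nil : ¬ w₀.Nil := by
    rw [Walk.nil_iff_length_eq]; have := hw₀.three_le_length; omega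
  have hwx : (w₀.rotate x hxw₀).IsCycle := hw₀.rotate hxw₀
  have hmemwx : ∀ z : V, z ∈ (w₀.rotate x hxw₀).support ↔ z ∈ w₀.support :=
    fun z => mem_support_rotate_iff w₀ hw₀nil hxw₀
  set wx := w₀.rotate x hxw₀ with hwxdef
  have hawx : a ∈ wx.support := (hmemwx a).mpr haw₀
  have hbwx : b ∉ wx.support := fun h => hbw ((hmemwx b).mp h)
  obtain ⟨Q, hQ, hQs⟩ := walk_of_induce_connected (hind x)
    (show b ∈ ({x}ᶜ : Set V) by simp [hadj.ne])
    (show a ∈ ({x}ᶜ : Set V) by simp [hax])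
  have hxQ : ∀ z ∈ Q.support, z ≠ x := fun z hz => by simpa using hQs z hz
  obtain ⟨y, Q1, Q2, hyS, hQsplit, hmin⟩ :=
    firstHit {z : V | z ∈ wx.support} Q (show a ∈ _ from hawx)
  have hyS' : y ∈ wx.support := hyS
  have hQ1path : Q1.IsPath := by
    rw [hQsplit] at hQ; exact hQ.of_append_left
  have hQ1sub : ∀ z ∈ Q1.support, z ∈ Q.support := by
    intro z hz; rw [hQsplit]; exact Walk.subset_support_append_left _ _ hz
  have hyx : y ≠ x := hxQ y (hQ1sub y Q1.end_mem_support)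
  have hyb : y ≠ b := fun h => hbwx (h ▸ hyS')
  obtain ⟨hTpath, hDpath, hcover⟩ := cycle_split hwx hyS' hyx
  rcases hcover a hawx with haT | haD
  · -- a on the arc x → y
    have hTsub := wx.support_takeUntil_subset hyS'
    have hcyc : ((Walk.cons hadj Walk.nil).append
        ((wx.takeUntil y hyS').append Q1.reverse)).IsCycle := by
      refine triangle_cycle _ _ _ (isPath_singleton hadj) hTpath hQ1path.reverse
        hadj.ne hyx.symm hyb.symm ?_ ?_ ?_
      · intro z hz hzT
        rcases (by simpa using hz : z = b ∨ z = x) with rfl | rfl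
        · exact absurd (hTsub hzT) hbwx
        · rfl
      · intro z hzT hzQ
        rw [Walk.support_reverse, List.mem_reverse] at hzQ
        exact hmin z hzQ (hTsub hzT)
      · intro z hzQ hz
        rw [Walk.support_reverse, List.mem_reverse] at hzQ
        rcases (by simpa using hz : z = b ∨ z = x) with rfl | rfl
        · rfl
        · exact absurd rfl (hxQ z (hQ1sub z hzQ))
    refine ⟨b, _, hcyc, ?_, Walk.start_mem_support _⟩
    rw [Walk.mem_support_append_iff, Walk.mem_support_append_iff]
    exact Or.inr (Or.inl haT)
  · -- a on the arc y → x
    have hDsub := wx.support_dropUntil_subset hyS'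
    have hcyc : (Q1.append ((wx.dropUntil y hyS').append
        (Walk.cons hadj.symm Walk.nil))).IsCycle := by
      refine triangle_cycle _ _ _ hQ1path hDpath (isPath_singleton hadj.symm)
        hyb.symm hyx hadj.ne ?_ ?_ ?_
      · intro z hzQ hzD
        exact hmin z hzQ (hDsub hzD)
      · intro z hzD hz
        rcases (by simpa using hz : z = x ∨ z = b) with rfl | rfl
        · rfl
        · exact absurd (hDsub hzD) hbwx
      · intro z hz hzQ
        rcases (by simpa using hz : z = x ∨ z = b) with rfl | rfl
        · exact absurd rfl (hxQ z (hQ1sub z hzQ))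
        · rfl
    refine ⟨b, _, hcyc, ?_, Walk.start_mem_support _⟩
    rw [Walk.mem_support_append_iff, Walk.mem_support_append_iff]
    exact Or.inr (Or.inl haD)


end St1Aux

/-- In a 2-connected graph, for distinct vertices `a`, `b`, `c`
there is a circuit through `a` and `b` and a path from `c` meeting the circuit
only in its endpoint `t ≠ a, b`. -/
theorem statement1 {V : Type u} (G : SimpleGraph V) (h2 : TwoConnected G)
    (a b c : V) (hab : a ≠ b) (hac : a ≠ c) (hbc : b ≠ c) :
    ∃ (C : Set (Sym2 V)) (t : V) (P : G.Walk c t),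
      IsCircuit G C ∧ a ∈ circVerts C ∧ b ∈ circVerts C ∧
      t ∈ circVerts C ∧ t ≠ a ∧ t ≠ b ∧ P.IsPath ∧
      ∀ x ∈ P.support, x ≠ t → x ∉ circVerts C := by
  classical
  obtain ⟨hconn, hcard, hind⟩ := h2
  obtain ⟨u, w, hw, haw, hbw⟩ :=
    St1Aux.cycle_through_pair hconn hcard hind (G.dist a b) rfl hab
  have hwnil : ¬ w.Nil := by
    rw [SimpleGraph.Walk.nil_iff_length_eq]; have := hw.three_le_length; omega
  have hcircw : IsCircuit G {e | e ∈ w.edges} := ⟨u, w, hw, rfl⟩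
  have hcv : ∀ z : V, z ∈ circVerts {e | e ∈ w.edges} ↔ z ∈ w.support := fun z =>
    St1Aux.mem_exists_edge_iff w hwnil
  by_cases hcw : c ∈ w.support
  · refine ⟨{e | e ∈ w.edges}, c, Walk.nil, hcircw, (hcv a).mpr haw, (hcv b).mpr hbw,
      (hcv c).mpr hcw, hac.symm, hbc.symm, SimpleGraph.Walk.IsPath.nil, ?_⟩
    intro x hx hxc
    simp only [SimpleGraph.Walk.support_nil, List.mem_singleton] at hx
    exact absurd hx hxc
  -- c is not on the cycle w
  obtain ⟨QA, hQA, hQAs⟩ := St1Aux.walk_of_induce_connected (hind a)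
    (show c ∈ ({a}ᶜ : Set V) by simp [hac.symm])
    (show b ∈ ({a}ᶜ : Set V) by simp [hab.symm])
  have haQA : ∀ z ∈ QA.support, z ≠ a := fun z hz => by simpa using hQAs z hz
  obtain ⟨t1, A1, A1', ht1S, hAsplit, hAmin⟩ :=
    St1Aux.firstHit {z : V | z ∈ w.support} QA (show b ∈ _ from hbw)
  have hA1path : A1.IsPath := by
    rw [hAsplit] at hQA; exact hQA.of_append_left
  have hA1sub : ∀ z ∈ A1.support, z ∈ QA.support := by
    intro z hz; rw [hAsplit]; exact SimpleGraph.Walk.subset_support_append_left _ _ hz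
  have ht1a : t1 ≠ a := haQA t1 (hA1sub t1 A1.end_mem_support)
  by_cases ht1b : t1 = b
  case neg =>
    refine ⟨{e | e ∈ w.edges}, t1, A1, hcircw, (hcv a).mpr haw, (hcv b).mpr hbw,
      (hcv t1).mpr ht1S, ht1a, ht1b, hA1path, ?_⟩
    intro z hz hzt hzC
    exact hzt (hAmin z hz ((hcv z).mp hzC))
  case pos =>
  have ht1b' : b = t1 := ht1b.symm
  subst ht1b'
  -- P1 := A1 : Walk c b, internally avoiding the cycle, avoiding a
  have hP1a : ∀ z ∈ A1.support, z ≠ a := fun z hz => haQA z (hA1sub z hz)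
  have hP1min : ∀ y ∈ A1.support, y ∈ w.support → y = b := hAmin
  clear hAsplit hA1sub haQA hQA hQAs
  -- symmetric construction avoiding b
  obtain ⟨QB, hQB, hQBs⟩ := St1Aux.walk_of_induce_connected (hind b)
    (show c ∈ ({b}ᶜ : Set V) by simp [hbc.symm])
    (show a ∈ ({b}ᶜ : Set V) by simp [hab])
  have hbQB : ∀ z ∈ QB.support, z ≠ b := fun z hz => by simpa using hQBs z hz
  obtain ⟨t2, B1, B1', ht2S, hBsplit, hBmin⟩ :=
    St1Aux.firstHit {z : V | z ∈ w.support} QB (show a ∈ _ from haw)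
  have hB1path : B1.IsPath := by
    rw [hBsplit] at hQB; exact hQB.of_append_left
  have hB1sub : ∀ z ∈ B1.support, z ∈ QB.support := by
    intro z hz; rw [hBsplit]; exact SimpleGraph.Walk.subset_support_append_left _ _ hz
  have ht2b : t2 ≠ b := hbQB t2 (hB1sub t2 B1.end_mem_support)
  by_cases ht2a : t2 = a
  case neg =>
    refine ⟨{e | e ∈ w.edges}, t2, B1, hcircw, (hcv a).mpr haw, (hcv b).mpr hbw,
      (hcv t2).mpr ht2S, ht2a, ht2b, hB1path, ?_⟩
    intro z hz hzt hzC
    exact hzt (hBmin z hz ((hcv z).mp hzC))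
  case pos =>
  have ht2a' : a = t2 := ht2a.symm
  subst ht2a'
  -- P2 := B1 : Walk c a, internally avoiding the cycle, avoiding b
  have hP2b : ∀ z ∈ B1.support, z ≠ b := fun z hz => hbQB z (hB1sub z hz)
  have hP2min : ∀ y ∈ B1.support, y ∈ w.support → y = a := hBmin
  clear hBsplit hB1sub hbQB hQB hQBs
  -- last meeting point of B1 (reversed) with A1
  have hP2rev : B1.reverse.IsPath := hB1path.reverse
  obtain ⟨x, R1, R2, hxP1, hRsplit, hRmin⟩ :=
    St1Aux.firstHit {z : V | z ∈ A1.support} B1.reverse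
      (show c ∈ _ from A1.start_mem_support)
  have hR1path : R1.IsPath := by
    have h := hP2rev; rw [hRsplit] at h; exact h.of_append_left
  have hR2path : R2.IsPath := by
    have h := hP2rev; rw [hRsplit] at h; exact h.of_append_right
  have hR1sub : ∀ z ∈ R1.support, z ∈ B1.support := by
    intro z hz
    have : z ∈ B1.reverse.support := by
      rw [hRsplit]; exact SimpleGraph.Walk.subset_support_append_left _ _ hz
    rwa [SimpleGraph.Walk.support_reverse, List.mem_reverse] at this
  have hR2sub : ∀ z ∈ R2.support, z ∈ B1.support := by
    intro z hz
    have : z ∈ B1.reverse.support := by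
      rw [hRsplit]; exact SimpleGraph.Walk.subset_support_append_right _ _ hz
    rwa [SimpleGraph.Walk.support_reverse, List.mem_reverse] at this
  have hxa : x ≠ a := hP1a x hxP1
  have hxb : x ≠ b := hP2b x (hR1sub x R1.end_mem_support)
  -- an arc of the cycle from b to a
  have hwb : (w.rotate b hbw).IsCycle := hw.rotate hbw
  have hmemwb : ∀ z : V, z ∈ (w.rotate b hbw).support ↔ z ∈ w.support :=
    fun z => St1Aux.mem_support_rotate_iff w hwnil hbw
  have hawb : a ∈ (w.rotate b hbw).support := (hmemwb a).mpr haw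
  obtain ⟨hA2path, -, -⟩ := St1Aux.cycle_split hwb hawb hab
  have hA2S : ∀ z ∈ ((w.rotate b hbw).takeUntil a hawb).support, z ∈ w.support := fun z hz =>
    (hmemwb z).mp ((w.rotate b hbw).support_takeUntil_subset hawb hz)
  -- the piece of P1 from x to b
  have hQ2path : (A1.dropUntil x hxP1).IsPath := hA1path.dropUntil hxP1
  have hQ2sub : ∀ z ∈ (A1.dropUntil x hxP1).support, z ∈ A1.support := fun z hz =>
    A1.support_dropUntil_subset hxP1 hz
  -- the new cycle through a and b
  have hcyc : (((w.rotate b hbw).takeUntil a hawb).append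
      (R1.append (A1.dropUntil x hxP1))).IsCycle := by
    refine St1Aux.triangle_cycle _ _ _ hA2path hR1path hQ2path hab.symm hxa.symm hxb.symm
      ?_ ?_ ?_
    · intro z hz hz'
      exact hP2min z (hR1sub z hz') (hA2S z hz)
    · intro z hz hz'
      exact hRmin z hz (hQ2sub z hz')
    · intro z hz hz'
      exact hP1min z (hQ2sub z hz) (hA2S z hz')
  set W' := ((w.rotate b hbw).takeUntil a hawb).append (R1.append (A1.dropUntil x hxP1))
    with hW'def
  have hW'nil : ¬ W'.Nil := by
    rw [SimpleGraph.Walk.nil_iff_length_eq]; have := hcyc.three_le_length; omega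
  have haW' : a ∈ W'.support := by
    rw [hW'def, SimpleGraph.Walk.mem_support_append_iff]
    exact Or.inl ((w.rotate b hbw).takeUntil a hawb).end_mem_support
  have hxW' : x ∈ W'.support := by
    rw [hW'def, SimpleGraph.Walk.mem_support_append_iff,
      SimpleGraph.Walk.mem_support_append_iff]
    exact Or.inr (Or.inl R1.end_mem_support)
  have hcv' : ∀ z : V, z ∈ circVerts {e | e ∈ W'.edges} ↔ z ∈ W'.support := fun z =>
    St1Aux.mem_exists_edge_iff W' hW'nil
  -- the final path from c into the new cycle
  obtain ⟨t, F1, F2, htS, hFsplit, hFmin⟩ :=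
    St1Aux.firstHit {z : V | z ∈ W'.support} R2.reverse (show x ∈ _ from hxW')
  have hF1path : F1.IsPath := by
    have h := hR2path.reverse; rw [hFsplit] at h; exact h.of_append_left
  have hF1sub : ∀ z ∈ F1.support, z ∈ R2.support := by
    intro z hz
    have : z ∈ R2.reverse.support := by
      rw [hFsplit]; exact SimpleGraph.Walk.subset_support_append_left _ _ hz
    rwa [SimpleGraph.Walk.support_reverse, List.mem_reverse] at this
  have htb : t ≠ b := hP2b t (hR2sub t (hF1sub t F1.end_mem_support))
  have hta : t ≠ a := by
    intro h
    subst h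
    have htR2 : t ∈ R2.support := hF1sub t F1.end_mem_support
    have htR2tail : t ∈ R2.support.tail := by
      rw [R2.support_eq_cons] at htR2
      rcases List.mem_cons.mp htR2 with h' | h'
      · exact absurd h'.symm hxa
      · exact h'
    have hnd : (R1.support ++ R2.support.tail).Nodup := by
      rw [← SimpleGraph.Walk.support_append, ← hRsplit]
      exact hP2rev.support_nodup
    exact (List.nodup_append.mp hnd).2.2 _ R1.start_mem_support _ htR2tail rfl
  refine ⟨{e | e ∈ W'.edges}, t, F1, ⟨b, W', hcyc, rfl⟩, (hcv' a).mpr haW',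
    (hcv' b).mpr W'.start_mem_support, (hcv' t).mpr htS, hta, htb, hF1path, ?_⟩
  intro z hz hzt hzC
  exact hzt (hFmin z hz ((hcv' z).mp hzC))
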